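/- Let X be a normal Hausdorff space. Then C(X), the set of graphs of continuous real-valued functions on X, is dense in L(X) with the upper Vietoris topology τ_V⁺; consequently C(X) is also dense in (L₀(X), τ_V⁺) and in (MC(X), τ_V⁺). -/

import Mathlib

open Set Topology TopologicalSpace

/-- The set of values of a set-valued map (identified with its graph) at a point. -/
def valuesAt {X : Type*} (F : Set (X × ℝ)) (x : X) : Set ℝ := {y | (x, y) ∈ F}

/-- A set-valued map (identified with its graph) is cusco: upper semicontinuous at every
point, with nonempty compact convex values. -/
def IsCusco {X : Type*} [TopologicalSpace X] (F : Set (X × ℝ)) : Prop :=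
  (∀ x : X, ∀ V : Set ℝ, IsOpen V → valuesAt F x ⊆ V →
    ∃ U : Set X, IsOpen U ∧ x ∈ U ∧ ∀ u ∈ U, valuesAt F u ⊆ V) ∧
  (∀ x : X, (valuesAt F x).Nonempty ∧ IsCompact (valuesAt F x) ∧ Convex ℝ (valuesAt F x))

/-- A minimal cusco map, i.e. a cusco map containing no proper cusco submap. -/
def IsMinimalCusco {X : Type*} [TopologicalSpace X] (F : Set (X × ℝ)) : Prop :=
  IsCusco F ∧ ∀ G : Set (X × ℝ), IsCusco G → G ⊆ F → G = F

/-- `L(X)`: all cusco maps from `X` to `ℝ`. -/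
def LSet (X : Type*) [TopologicalSpace X] : Set (Set (X × ℝ)) := {F | IsCusco F}

/-- `L₀(X)`: cusco maps that are single-valued at each isolated point. -/
def L0Set (X : Type*) [TopologicalSpace X] : Set (Set (X × ℝ)) :=
  {F | IsCusco F ∧ ∀ x : X, IsOpen ({x} : Set X) → ∃ y : ℝ, valuesAt F x = {y}}

/-- `MC(X)`: all minimal cusco maps from `X` to `ℝ`. -/
def MCSet (X : Type*) [TopologicalSpace X] : Set (Set (X × ℝ)) := {F | IsMinimalCusco F}

/-- The upper Vietoris topology on a family of subsets of `X × ℝ`. -/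
def upperVietoris {X : Type*} [TopologicalSpace X] (S : Set (Set (X × ℝ))) :
    TopologicalSpace S :=
  .generateFrom {U | ∃ W : Set (X × ℝ), IsOpen W ∧ U = {A : S | (A : Set (X × ℝ)) ⊆ W}}

/-- The Vietoris topology on a family of subsets of `X × ℝ`. -/
def vietoris {X : Type*} [TopologicalSpace X] (S : Set (Set (X × ℝ))) :
    TopologicalSpace S :=
  .generateFrom
    ({U | ∃ W : Set (X × ℝ), IsOpen W ∧ U = {A : S | (A : Set (X × ℝ)) ⊆ W}} ∪
     {U | ∃ W : Set (X × ℝ), IsOpen W ∧ U = {A : S | ((A : Set (X × ℝ)) ∩ W).Nonempty}})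

/-- The graph of a function `X → ℝ`. -/
def graphOf {X : Type*} (f : X → ℝ) : Set (X × ℝ) := {p | p.2 = f p.1}

/-- `X` is countably compact: every countable open cover has a finite subcover. -/
def CountablyCompact (X : Type*) [TopologicalSpace X] : Prop :=
  ∀ U : ℕ → Set X, (∀ n, IsOpen (U n)) → (⋃ n, U n) = Set.univ →
    ∃ t : Finset ℕ, (⋃ n ∈ t, U n) = Set.univ


/-! ### Auxiliary development -/

section KT
variable {X : Type*} [TopologicalSpace X]

/-- upper semicontinuous (sequentially stated via filters) -/
def Usc (g : X → ℝ) : Prop := ∀ x y, g x < y → ∀ᶠ u in nhds x, g u < y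

def Lsc (g : X → ℝ) : Prop := ∀ x y, y < g x → ∀ᶠ u in nhds x, y < g u

lemma usc_of_continuous {g : X → ℝ} (hg : Continuous g) : Usc g := fun x y hy =>
  (isOpen_lt hg continuous_const).mem_nhds hy

lemma lsc_of_continuous {g : X → ℝ} (hg : Continuous g) : Lsc g := fun x y hy =>
  (isOpen_lt continuous_const hg).mem_nhds hy

lemma usc_lt_lsc_open {g h : X → ℝ} (hg : Usc g) (hh : Lsc h) : IsOpen {x | g x < h x} := by
  rw [isOpen_iff_mem_nhds]
  intro x hx
  have hx' : g x < h x := hx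
  have h1 := hg x ((g x + h x) / 2) (by linarith)
  have h2 := hh x ((g x + h x) / 2) (by linarith)
  filter_upwards [h1, h2] with u hu1 hu2
  exact lt_trans hu1 hu2

lemma kt_step [NormalSpace X] {g h φ : X → ℝ} (hg : Usc g) (hh : Lsc h)
    (hgh : ∀ x, g x ≤ h x) (hφ : Continuous φ) {δ : ℝ} (hδ : 0 < δ)
    (hlo : ∀ x, g x - δ ≤ φ x) (hhi : ∀ x, φ x ≤ h x + δ) :
    ∃ ψ : X → ℝ, Continuous ψ ∧ (∀ x, g x - 2 / 3 * δ ≤ ψ x) ∧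
      (∀ x, ψ x ≤ h x + 2 / 3 * δ) ∧ ∀ x, |ψ x - φ x| ≤ δ / 3 := by
  have hC : IsClosed {x | φ x + δ / 3 ≤ g x} := by
    have h1 : IsOpen {x | g x < φ x + δ / 3} :=
      usc_lt_lsc_open hg (lsc_of_continuous (by continuity))
    have : {x | φ x + δ / 3 ≤ g x} = {x | g x < φ x + δ / 3}ᶜ := by
      ext x; simp [not_lt]
    rw [this]; exact h1.isClosed_compl
  have hD : IsClosed {x | h x ≤ φ x - δ / 3} := by
    have h1 : IsOpen {x | φ x - δ / 3 < h x} :=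
      usc_lt_lsc_open (usc_of_continuous (by continuity)) hh
    have : {x | h x ≤ φ x - δ / 3} = {x | φ x - δ / 3 < h x}ᶜ := by
      ext x; simp [not_lt]
    rw [this]; exact h1.isClosed_compl
  have hdisj : Disjoint {x | h x ≤ φ x - δ / 3} {x | φ x + δ / 3 ≤ g x} := by
    rw [Set.disjoint_left]
    intro x h1 h2
    have h3 := hgh x
    simp only [mem_setOf_eq] at h1 h2
    linarith
  obtain ⟨u, hu0, hu1, hu01⟩ := exists_continuous_zero_one_of_isClosed hD hC hdisj
  refine ⟨fun x => φ x - δ / 3 + 2 * δ / 3 * u x,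
    by exact (hφ.sub continuous_const).add (continuous_const.mul u.continuous), ?_, ?_, ?_⟩
  · intro x
    show g x - 2 / 3 * δ ≤ φ x - δ / 3 + 2 * δ / 3 * u x
    by_cases hx : φ x + δ / 3 ≤ g x
    · have h1 : u x = 1 := hu1 hx
      rw [h1]; have := hlo x; linarith
    · push_neg at hx
      have := (hu01 x).1
      nlinarith
  · intro x
    show φ x - δ / 3 + 2 * δ / 3 * u x ≤ h x + 2 / 3 * δ
    by_cases hx : h x ≤ φ x - δ / 3
    · have h1 : u x = 0 := hu0 hx
      rw [h1]; have := hhi x; linarith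
    · push_neg at hx
      have := (hu01 x).2
      nlinarith
  · intro x
    show |φ x - δ / 3 + 2 * δ / 3 * u x - φ x| ≤ δ / 3
    have h1 := (hu01 x).1
    have h2 := (hu01 x).2
    rw [abs_le]
    constructor <;> nlinarith

/-- Katětov–Tong insertion theorem, bounded case. -/
lemma kt [NormalSpace X] {g h : X → ℝ} (hg : Usc g) (hh : Lsc h)
    (hgh : ∀ x, g x ≤ h x) (hg1 : ∀ x, -1 ≤ g x) (hg2 : ∀ x, g x ≤ 1)
    (hh1 : ∀ x, -1 ≤ h x) (hh2 : ∀ x, h x ≤ 1) :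
    ∃ f : X → ℝ, Continuous f ∧ ∀ x, g x ≤ f x ∧ f x ≤ h x := by
  set d : ℕ → ℝ := fun n => 2 * (2 / 3) ^ n with hd
  have hdpos : ∀ n, 0 < d n := fun n => by positivity
  have hdsucc : ∀ n, d (n + 1) = 2 / 3 * d n := by
    intro n; simp only [hd, pow_succ]; ring
  have key : ∀ (φ : X → ℝ) (n : ℕ), ∃ ψ : X → ℝ,
      (Continuous φ ∧ (∀ x, g x - d n ≤ φ x) ∧ (∀ x, φ x ≤ h x + d n)) →
      ((Continuous ψ ∧ (∀ x, g x - d (n + 1) ≤ ψ x) ∧ (∀ x, ψ x ≤ h x + d (n + 1))) ∧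
        ∀ x, |ψ x - φ x| ≤ d n / 3) := by
    intro φ n
    by_cases H : Continuous φ ∧ (∀ x, g x - d n ≤ φ x) ∧ (∀ x, φ x ≤ h x + d n)
    · obtain ⟨ψ, c1, c2, c3, c4⟩ := kt_step hg hh hgh H.1 (hdpos n) H.2.1 H.2.2
      refine ⟨ψ, fun _ => ⟨⟨c1, ?_, ?_⟩, c4⟩⟩
      · intro x; rw [hdsucc n]; have := c2 x; linarith
      · intro x; rw [hdsucc n]; have := c3 x; linarith
    · exact ⟨φ, fun hfalse => absurd hfalse H⟩
  choose step hstep using key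
  set seq : ℕ → X → ℝ := fun n =>
    Nat.rec (motive := fun _ => X → ℝ) (fun _ => 0) (fun k ih => step ih k) n with hseq
  have hseq0 : seq 0 = fun _ => 0 := rfl
  have hseqS : ∀ n, seq (n + 1) = step (seq n) n := fun n => rfl
  have hQ : ∀ n, Continuous (seq n) ∧ (∀ x, g x - d n ≤ seq n x) ∧
      (∀ x, seq n x ≤ h x + d n) := by
    intro n
    induction n with
    | zero =>
      refine ⟨continuous_const, fun x => ?_, fun x => ?_⟩
      · have h1 := hg2 x; simp only [hseq0, hd]; norm_num; linarith
      · have h1 := hh1 x; simp only [hseq0, hd]; norm_num; linarith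
    | succ n ih =>
      rw [hseqS n]; exact (hstep (seq n) n ih).1
  have hdiff : ∀ n x, |seq (n + 1) x - seq n x| ≤ d n / 3 := by
    intro n x
    have := (hstep (seq n) n (hQ n)).2 x
    rw [hseqS n]
    exact this
  have hsummable : Summable (fun n => d n / 3) := by
    have h1 : Summable (fun n : ℕ => (2 / 3 : ℝ) ^ n) :=
      summable_geometric_of_lt_one (by norm_num) (by norm_num)
    have : (fun n => d n / 3) = fun n : ℕ => 2 / 3 * (2 / 3 : ℝ) ^ n := by
      funext n; simp only [hd]; ring
    rw [this]
    exact h1.mul_left _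
  set f : X → ℝ := fun x => ∑' n, (seq (n + 1) x - seq n x) with hf
  have hfc : Continuous f := by
    apply continuous_tsum (fun n => ((hQ (n + 1)).1.sub (hQ n).1)) hsummable
    intro n x
    rw [Real.norm_eq_abs]
    exact hdiff n x
  have htendsto : ∀ x, Filter.Tendsto (fun N => seq N x) Filter.atTop (nhds (f x)) := by
    intro x
    have hsx : Summable (fun n => seq (n + 1) x - seq n x) := by
      apply Summable.of_norm_bounded hsummable
      intro n; rw [Real.norm_eq_abs]; exact hdiff n x
    have h1 := hsx.hasSum.tendsto_sum_nat
    have h2 : ∀ N, ∑ n ∈ Finset.range N, (seq (n + 1) x - seq n x) = seq N x := by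
      intro N
      rw [Finset.sum_range_sub (fun n => seq n x)]
      simp [hseq0]
    simp only [h2] at h1
    exact h1
  have hd0 : Filter.Tendsto d Filter.atTop (nhds 0) := by
    have h1 : Filter.Tendsto (fun n : ℕ => (2 / 3 : ℝ) ^ n) Filter.atTop (nhds 0) :=
      tendsto_pow_atTop_nhds_zero_of_lt_one (by norm_num) (by norm_num)
    have := h1.const_mul (2 : ℝ)
    simpa [hd] using this
  refine ⟨f, hfc, fun x => ⟨?_, ?_⟩⟩
  · have h1 : Filter.Tendsto (fun N => g x - d N) Filter.atTop (nhds (g x)) := by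
      have := (tendsto_const_nhds (x := g x) (f := Filter.atTop (α := ℕ))).sub hd0
      simpa using this
    exact le_of_tendsto_of_tendsto' h1 (htendsto x) (fun N => (hQ N).2.1 x)
  · have h1 : Filter.Tendsto (fun N => h x + d N) Filter.atTop (nhds (h x)) := by
      have := (tendsto_const_nhds (x := h x) (f := Filter.atTop (α := ℕ))).add hd0
      simpa using this
    exact le_of_tendsto_of_tendsto' (htendsto x) h1 (fun N => (hQ N).2.2 x)

end KT

noncomputable def tr (y : ℝ) : ℝ := y / (1 + |y|)

lemma tr_mono : StrictMono tr := by
  intro a b hab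
  have ha : (0:ℝ) < 1 + |a| := by positivity
  have hb : (0:ℝ) < 1 + |b| := by positivity
  rw [tr, tr, div_lt_div_iff₀ ha hb]
  rcases abs_cases a with ⟨h1, h2⟩ | ⟨h1, h2⟩ <;>
    rcases abs_cases b with ⟨h3, h4⟩ | ⟨h3, h4⟩ <;> rw [h1, h3] <;> nlinarith

lemma tr_cont : Continuous tr := by
  apply Continuous.div continuous_id (by continuity)
  intro y; positivity

lemma tr_abs_lt (y : ℝ) : |tr y| < 1 := by
  have h : (0:ℝ) < 1 + |y| := by positivity
  rw [tr, abs_div, abs_of_pos h, div_lt_one h]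
  linarith

lemma tr_inv (z : ℝ) (hz : |z| < 1) : tr (z / (1 - |z|)) = z := by
  have h1 : (0:ℝ) < 1 - |z| := by linarith
  have h2 : |z / (1 - |z|)| = |z| / (1 - |z|) := by
    rw [abs_div, abs_of_pos h1]
  rw [tr, h2]
  have h3 : 1 + |z| / (1 - |z|) = 1 / (1 - |z|) := by field_simp; ring
  rw [h3]
  field_simp

section Sel
variable {X : Type*} [TopologicalSpace X] [NormalSpace X]

lemma cusco_graph_subset {F W : Set (X × ℝ)} (hF : IsCusco F)
    (hW : IsOpen W) (hFW : F ⊆ W) : ∃ f : X → ℝ, Continuous f ∧ graphOf f ⊆ W := by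
  obtain ⟨husc, hval⟩ := hF
  set q : X → ℝ := fun x => sInf (valuesAt F x) with hqdef
  set p : X → ℝ := fun x => sSup (valuesAt F x) with hpdef
  have hne : ∀ x, (valuesAt F x).Nonempty := fun x => (hval x).1
  have hcpt : ∀ x, IsCompact (valuesAt F x) := fun x => (hval x).2.1
  have hq : ∀ x, q x ∈ valuesAt F x := fun x => (hcpt x).sInf_mem (hne x)
  have hp : ∀ x, p x ∈ valuesAt F x := fun x => (hcpt x).sSup_mem (hne x)
  have hqp : ∀ x, q x ≤ p x := fun x => le_csSup (hcpt x).bddAbove (hq x)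
  have hIcc : ∀ x, valuesAt F x = Icc (q x) (p x) := by
    intro x
    apply Subset.antisymm
    · exact fun y hy => ⟨csInf_le (hcpt x).bddBelow hy, le_csSup (hcpt x).bddAbove hy⟩
    · exact ((hval x).2.2).ordConnected.out (hq x) (hp x)
  set sl : X → Set ℝ := fun x => {y | (x, y) ∈ W} with hsldef
  have hslo : ∀ x, IsOpen (sl x) := fun x =>
    hW.preimage (continuous_const.prodMk continuous_id)
  have hsub : ∀ x, valuesAt F x ⊆ sl x := fun x y hy => hFW hy
  -- thickening
  have thick : ∀ x, ∃ ε > 0, Icc (q x - ε) (p x + ε) ⊆ sl x := by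
    intro x
    obtain ⟨ε₁, hε₁, h1⟩ := Metric.isOpen_iff.1 (hslo x) (q x) (hsub x (hq x))
    obtain ⟨ε₂, hε₂, h2⟩ := Metric.isOpen_iff.1 (hslo x) (p x) (hsub x (hp x))
    have hm1 := min_le_left ε₁ ε₂
    have hm2 := min_le_right ε₁ ε₂
    refine ⟨min ε₁ ε₂ / 2, by positivity, ?_⟩
    intro y hy
    rcases lt_or_ge y (q x) with hlt | hge
    · apply h1
      rw [Metric.mem_ball, Real.dist_eq, abs_lt]
      constructor <;> [linarith [hy.1]; linarith]
    · rcases le_or_gt y (p x) with hle | hgt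
      · exact hsub x (by rw [hIcc x]; exact ⟨hge, hle⟩)
      · apply h2
        rw [Metric.mem_ball, Real.dist_eq, abs_lt]
        constructor <;> [linarith; linarith [hy.2]]
  set Cs : X → Set ℝ := fun x => {c | Icc c (p x) ⊆ sl x} with hCdef
  set Ds : X → Set ℝ := fun x => {d | Icc (q x) d ⊆ sl x} with hDdef
  have hCthick : ∀ x, ∀ ε > 0, Icc (q x - ε) (p x + ε) ⊆ sl x → q x - ε ∈ Cs x := by
    intro x ε hε h y hy
    exact h ⟨hy.1, by linarith [hy.2]⟩
  have hDthick : ∀ x, ∀ ε > 0, Icc (q x - ε) (p x + ε) ⊆ sl x → p x + ε ∈ Ds x := by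
    intro x ε hε h y hy
    exact h ⟨by linarith [hy.1], hy.2⟩
  set a : X → ℝ := fun x => sInf (tr '' Cs x) with hadef
  set b : X → ℝ := fun x => sSup (tr '' Ds x) with hbdef
  have hCne : ∀ x, (tr '' Cs x).Nonempty := by
    intro x
    obtain ⟨ε, hε, h⟩ := thick x
    exact ⟨tr (q x - ε), mem_image_of_mem tr (hCthick x ε hε h)⟩
  have hDne : ∀ x, (tr '' Ds x).Nonempty := by
    intro x
    obtain ⟨ε, hε, h⟩ := thick x
    exact ⟨tr (p x + ε), mem_image_of_mem tr (hDthick x ε hε h)⟩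
  have hbddB : ∀ s : Set ℝ, BddBelow (tr '' s) := by
    intro s
    refine ⟨-1, ?_⟩
    rintro z ⟨c, _, rfl⟩
    have := tr_abs_lt c
    rw [abs_lt] at this
    linarith [this.1]
  have hbddA : ∀ s : Set ℝ, BddAbove (tr '' s) := by
    intro s
    refine ⟨1, ?_⟩
    rintro z ⟨c, _, rfl⟩
    have := tr_abs_lt c
    rw [abs_lt] at this
    linarith [this.2]
  -- tube lemma
  have tube : ∀ x c d, c < q x → p x < d → Icc c d ⊆ sl x →
      ∀ᶠ u in nhds x, c ∈ Cs u ∧ d ∈ Ds u ∧ c < q u ∧ p u < d := by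
    intro x c d hc hd hcd
    have hsubW : ({x} ×ˢ Icc c d : Set (X × ℝ)) ⊆ W := by
      rintro ⟨x', y⟩ ⟨hx', hy⟩
      simp only [mem_singleton_iff] at hx'
      subst hx'
      exact hcd hy
    obtain ⟨U₁, V, hU₁, hV, hxU₁, hIV, hUV⟩ :=
      generalized_tube_lemma isCompact_singleton isCompact_Icc hW hsubW
    obtain ⟨U₂, hU₂, hxU₂, hF2⟩ := husc x (Ioo c d) isOpen_Ioo (by
      rw [hIcc]
      exact fun y hy => ⟨lt_of_lt_of_le hc hy.1, lt_of_le_of_lt hy.2 hd⟩)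
    have hmem : U₁ ∩ U₂ ∈ nhds x :=
      Filter.inter_mem (hU₁.mem_nhds (hxU₁ rfl)) (hU₂.mem_nhds hxU₂)
    filter_upwards [hmem] with u hu
    have hFu : valuesAt F u ⊆ Ioo c d := hF2 u hu.2
    have hqu : c < q u := (hFu (hq u)).1
    have hpu : p u < d := (hFu (hp u)).2
    have hIccWu : Icc c d ⊆ sl u := fun y hy => hUV ⟨hu.1, hIV hy⟩
    refine ⟨fun y hy => hIccWu ⟨hy.1, le_trans hy.2 hpu.le⟩,
      fun y hy => hIccWu ⟨le_trans hqu.le hy.1, hy.2⟩, hqu, hpu⟩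
  -- semicontinuity facts
  have husc_a : Usc a := by
    intro x y hy
    obtain ⟨ε, hε, hthick⟩ := thick x
    obtain ⟨z, hz, hzy⟩ := exists_lt_of_csInf_lt (hCne x) hy
    obtain ⟨c, hcC, rfl⟩ := hz
    set c₀ := min c (q x - ε) with hc₀def
    have hc₀C : c₀ ∈ Cs x := by
      rcases min_cases c (q x - ε) with ⟨h1, _⟩ | ⟨h1, _⟩ <;> rw [hc₀def, h1]
      · exact hcC
      · exact hCthick x ε hε hthick
    have hc₀q : c₀ < q x := lt_of_le_of_lt (min_le_right _ _) (by linarith)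
    have hIccc₀ : Icc c₀ (p x + ε) ⊆ sl x := by
      intro y' hy'
      rcases le_or_gt y' (p x) with h | h
      · exact hc₀C ⟨hy'.1, h⟩
      · exact hthick ⟨by linarith [hqp x], hy'.2⟩
    filter_upwards [tube x c₀ (p x + ε) hc₀q (by linarith) hIccc₀] with u hu
    calc a u ≤ tr c₀ := csInf_le (hbddB _) (mem_image_of_mem tr hu.1)
      _ ≤ tr c := tr_mono.monotone (min_le_left _ _)
      _ < y := hzy
  have hlsc_b : Lsc b := by
    intro x y hy
    obtain ⟨ε, hε, hthick⟩ := thick x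
    obtain ⟨z, hz, hzy⟩ := exists_lt_of_lt_csSup (hDne x) hy
    obtain ⟨d, hdD, rfl⟩ := hz
    set d₀ := max d (p x + ε) with hd₀def
    have hd₀D : d₀ ∈ Ds x := by
      rcases max_cases d (p x + ε) with ⟨h1, _⟩ | ⟨h1, _⟩ <;> rw [hd₀def, h1]
      · exact hdD
      · exact hDthick x ε hε hthick
    have hd₀p : p x < d₀ := lt_of_lt_of_le (by linarith) (le_max_right _ _)
    have hIccd₀ : Icc (q x - ε) d₀ ⊆ sl x := by
      intro y' hy'
      rcases le_or_gt (q x) y' with h | h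
      · exact hd₀D ⟨h, hy'.2⟩
      · exact hthick ⟨hy'.1, by linarith [hqp x]⟩
    filter_upwards [tube x (q x - ε) d₀ (by linarith) hd₀p hIccd₀] with u hu
    calc y < tr d := hzy
      _ ≤ tr d₀ := tr_mono.monotone (le_max_left _ _)
      _ ≤ b u := le_csSup (hbddA _) (mem_image_of_mem tr hu.2.1)
  have hlsc_tq : Lsc (fun x => tr (q x)) := by
    intro x y hy
    obtain ⟨ε, hε, hthick⟩ := thick x
    obtain ⟨δ, hδ, hball⟩ := Metric.isOpen_iff.1 (isOpen_Ioi.preimage tr_cont) (q x)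
      (by simpa using hy)
    set c := max (q x - ε / 2) (q x - δ / 2) with hcdef
    have h1 : c < q x := by
      rcases max_cases (q x - ε / 2) (q x - δ / 2) with ⟨h, _⟩ | ⟨h, _⟩ <;>
        rw [hcdef, h] <;> linarith
    have h2 : y < tr c := by
      have : c ∈ Metric.ball (q x) δ := by
        rw [Metric.mem_ball, Real.dist_eq, abs_lt]
        have := le_max_right (q x - ε / 2) (q x - δ / 2)
        constructor <;> [linarith; linarith]
      exact hball this
    have h3 : q x - ε ≤ c := le_trans (by linarith) (le_max_left _ _)
    have hIcc' : Icc c (p x + ε) ⊆ sl x :=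
      fun y' hy' => hthick ⟨by linarith [hy'.1], hy'.2⟩
    filter_upwards [tube x c (p x + ε) h1 (by linarith) hIcc'] with u hu
    exact lt_trans h2 (tr_mono hu.2.2.1)
  have husc_tp : Usc (fun x => tr (p x)) := by
    intro x y hy
    obtain ⟨ε, hε, hthick⟩ := thick x
    obtain ⟨δ, hδ, hball⟩ := Metric.isOpen_iff.1 (isOpen_Iio.preimage tr_cont) (p x)
      (by simpa using hy)
    set d := min (p x + ε / 2) (p x + δ / 2) with hddef
    have h1 : p x < d := by
      rcases min_cases (p x + ε / 2) (p x + δ / 2) with ⟨h, _⟩ | ⟨h, _⟩ <;>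
        rw [hddef, h] <;> linarith
    have h2 : tr d < y := by
      have : d ∈ Metric.ball (p x) δ := by
        rw [Metric.mem_ball, Real.dist_eq, abs_lt]
        have := min_le_right (p x + ε / 2) (p x + δ / 2)
        constructor <;> [linarith; linarith]
      exact hball this
    have h3 : d ≤ p x + ε := le_trans (min_le_left _ _) (by linarith)
    have hIcc' : Icc (q x - ε) d ⊆ sl x :=
      fun y' hy' => hthick ⟨hy'.1, by linarith [hy'.2]⟩
    filter_upwards [tube x (q x - ε) d (by linarith) h1 hIcc'] with u hu
    exact lt_trans (tr_mono hu.2.2.2) h2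
  -- order facts
  have habs : ∀ y : ℝ, -1 < tr y ∧ tr y < 1 := by
    intro y
    have := tr_abs_lt y
    rw [abs_lt] at this
    exact this
  have ha_lt_tq : ∀ x, a x < tr (q x) := by
    intro x
    obtain ⟨ε, hε, hthick⟩ := thick x
    calc a x ≤ tr (q x - ε) := csInf_le (hbddB _) (mem_image_of_mem tr (hCthick x ε hε hthick))
      _ < tr (q x) := tr_mono (by linarith)
  have htp_lt_b : ∀ x, tr (p x) < b x := by
    intro x
    obtain ⟨ε, hε, hthick⟩ := thick x
    calc tr (p x) < tr (p x + ε) := tr_mono (by linarith)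
      _ ≤ b x := le_csSup (hbddA _) (mem_image_of_mem tr (hDthick x ε hε hthick))
  have ha1 : ∀ x, -1 ≤ a x := by
    intro x
    apply le_csInf (hCne x)
    rintro z ⟨c, _, rfl⟩
    exact (habs c).1.le
  have ha2 : ∀ x, a x ≤ 1 := fun x =>
    le_trans (ha_lt_tq x).le (habs (q x)).2.le
  have hb1 : ∀ x, -1 ≤ b x := fun x =>
    le_trans (habs (p x)).1.le (htp_lt_b x).le
  have hb2 : ∀ x, b x ≤ 1 := by
    intro x
    apply csSup_le (hDne x)
    rintro z ⟨d, _, rfl⟩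
    exact (habs d).2.le
  -- the two insertions
  obtain ⟨f₁, hf₁c, hf₁⟩ := kt husc_a hlsc_tq (fun x => (ha_lt_tq x).le) ha1 ha2
    (fun x => (habs (q x)).1.le) (fun x => (habs (q x)).2.le)
  obtain ⟨f₂, hf₂c, hf₂⟩ := kt husc_tp hlsc_b (fun x => (htp_lt_b x).le)
    (fun x => (habs (p x)).1.le) (fun x => (habs (p x)).2.le) hb1 hb2
  set ft : X → ℝ := fun x => (f₁ x + f₂ x) / 2 with hftdef
  have hftc : Continuous ft := (hf₁c.add hf₂c).div_const 2
  have hstrict1 : ∀ x, a x < ft x := by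
    intro x
    have h1 := (hf₁ x).1
    have h2 := (hf₂ x).1
    have h3 : a x < tr (p x) := lt_of_lt_of_le (ha_lt_tq x) (tr_mono.monotone (hqp x))
    show a x < (f₁ x + f₂ x) / 2
    linarith
  have hstrict2 : ∀ x, ft x < b x := by
    intro x
    have h1 := (hf₁ x).2
    have h2 := (hf₂ x).2
    have h3 : tr (q x) < b x := lt_of_lt_of_le (lt_of_le_of_lt (tr_mono.monotone (hqp x))
      (htp_lt_b x)) (le_refl _)
    show (f₁ x + f₂ x) / 2 < b x
    linarith
  have hftabs : ∀ x, |ft x| < 1 := by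
    intro x
    rw [abs_lt]
    constructor
    · have := ha1 x; have := hstrict1 x; linarith
    · have := hb2 x; have := hstrict2 x; linarith
  set f : X → ℝ := fun x => ft x / (1 - |ft x|) with hfdef
  have hfc : Continuous f := by
    apply Continuous.div hftc (continuous_const.sub (continuous_abs.comp hftc))
    intro x
    exact sub_ne_zero_of_ne (hftabs x).ne'
  have htrf : ∀ x, tr (f x) = ft x := fun x => tr_inv (ft x) (hftabs x)
  have hmem : ∀ x, f x ∈ sl x := by
    intro x
    have h1 : tr (f x) < b x := by rw [htrf x]; exact hstrict2 x
    have h2 : a x < tr (f x) := by rw [htrf x]; exact hstrict1 x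
    obtain ⟨z, hz, hzlt⟩ := exists_lt_of_lt_csSup (hDne x) h1
    obtain ⟨d, hdD, rfl⟩ := hz
    obtain ⟨z', hz', hzlt'⟩ := exists_lt_of_csInf_lt (hCne x) h2
    obtain ⟨c, hcC, rfl⟩ := hz'
    have hfd : f x < d := tr_mono.lt_iff_lt.1 hzlt
    have hcf : c < f x := tr_mono.lt_iff_lt.1 hzlt'
    rcases le_or_gt (f x) (p x) with h | h
    · exact hcC ⟨hcf.le, h⟩
    · exact hdD ⟨le_trans (hqp x) h.le, hfd.le⟩
  refine ⟨f, hfc, ?_⟩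
  rintro ⟨x, y⟩ hxy
  have : y = f x := hxy
  rw [this]
  exact hmem x

end Sel

section Graph
variable {X : Type*} [TopologicalSpace X]

lemma valuesAt_graphOf (f : X → ℝ) (x : X) : valuesAt (graphOf f) x = {f x} := by
  ext y; simp [valuesAt, graphOf]

lemma graph_isCusco {f : X → ℝ} (hf : Continuous f) : IsCusco (graphOf f) := by
  constructor
  · intro x V hV hVsub
    refine ⟨f ⁻¹' V, hV.preimage hf, ?_, ?_⟩
    · exact hVsub (by rw [valuesAt_graphOf]; rfl)
    · intro u hu
      rw [valuesAt_graphOf]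
      exact singleton_subset_iff.2 hu
  · intro x
    rw [valuesAt_graphOf]
    exact ⟨⟨f x, rfl⟩, isCompact_singleton, convex_singleton _⟩

lemma graph_isMinimalCusco {f : X → ℝ} (hf : Continuous f) :
    IsMinimalCusco (graphOf f) := by
  refine ⟨graph_isCusco hf, fun G hG hGsub => ?_⟩
  apply Subset.antisymm hGsub
  intro pt hpt
  have hpt' : pt.2 = f pt.1 := hpt
  obtain ⟨z, hz⟩ := (hG.2 pt.1).1
  have hz' : z ∈ valuesAt (graphOf f) pt.1 := hGsub hz
  rw [valuesAt_graphOf, mem_singleton_iff] at hz'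
  have hpz : pt = (pt.1, z) := Prod.ext rfl (hpt'.trans hz'.symm)
  rw [hpz]
  exact hz

end Graph

section Dens
variable {X : Type*} [TopologicalSpace X] [NormalSpace X]

lemma dense_generic {S : Set (Set (X × ℝ))} (hS : ∀ F ∈ S, IsCusco F)
    (hgr : ∀ f : X → ℝ, Continuous f → graphOf f ∈ S) :
    @Dense S (upperVietoris S)
      {F : S | ∃ f : X → ℝ, Continuous f ∧ (F : Set (X × ℝ)) = graphOf f} := by
  letI : TopologicalSpace S := upperVietoris S
  refine dense_iff_inter_open.2 ?_
  rintro U hU ⟨F, hFU⟩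
  have key : ∀ U' : Set S,
      TopologicalSpace.GenerateOpen
        {U | ∃ W : Set (X × ℝ), IsOpen W ∧ U = {A : S | (A : Set (X × ℝ)) ⊆ W}} U' →
      ∀ A ∈ U', ∃ W : Set (X × ℝ), IsOpen W ∧ (A : Set (X × ℝ)) ⊆ W ∧
        ∀ B : S, (B : Set (X × ℝ)) ⊆ W → B ∈ U' := by
    intro U' hU'
    induction hU' with
    | basic V hV =>
      obtain ⟨W, hW, rfl⟩ := hV
      exact fun A hA => ⟨W, hW, hA, fun B hB => hB⟩
    | univ => exact fun A _ => ⟨univ, isOpen_univ, subset_univ _, fun B _ => mem_univ B⟩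
    | inter V₁ V₂ h1 h2 ih1 ih2 =>
      intro A hA
      obtain ⟨W₁, hW₁, hA1, hB1⟩ := ih1 A hA.1
      obtain ⟨W₂, hW₂, hA2, hB2⟩ := ih2 A hA.2
      exact ⟨W₁ ∩ W₂, hW₁.inter hW₂, subset_inter hA1 hA2,
        fun B hB => ⟨hB1 B (hB.trans inter_subset_left), hB2 B (hB.trans inter_subset_right)⟩⟩
    | sUnion K hK ih =>
      intro A hA
      obtain ⟨V, hV, hAV⟩ := hA
      obtain ⟨W, hW, hAW, hB⟩ := ih V hV A hAV
      exact ⟨W, hW, hAW, fun B hBW => ⟨V, hV, hB B hBW⟩⟩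
  have hU' : TopologicalSpace.GenerateOpen
      {U | ∃ W : Set (X × ℝ), IsOpen W ∧ U = {A : S | (A : Set (X × ℝ)) ⊆ W}} U := hU
  obtain ⟨W, hW, hFW, hB⟩ := key U hU' F hFU
  obtain ⟨f, hfc, hfW⟩ := cusco_graph_subset (hS F.1 F.2) hW hFW
  exact ⟨⟨graphOf f, hgr f hfc⟩, hB ⟨graphOf f, hgr f hfc⟩ hfW, f, hfc, rfl⟩

end Dens

/-- For normal Hausdorff `X`, the continuous functions (identified with their graphs)
are dense in `(L(X), τ_V⁺)`, `(L₀(X), τ_V⁺)` and `(MC(X), τ_V⁺)`. -/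
theorem continuous_dense_upperVietoris {X : Type*} [TopologicalSpace X] [T2Space X]
    [NormalSpace X] :
    (@Dense _ (upperVietoris (LSet X))
        {F : LSet X | ∃ f : X → ℝ, Continuous f ∧ (F : Set (X × ℝ)) = graphOf f}) ∧
    (@Dense _ (upperVietoris (L0Set X))
        {F : L0Set X | ∃ f : X → ℝ, Continuous f ∧ (F : Set (X × ℝ)) = graphOf f}) ∧
    (@Dense _ (upperVietoris (MCSet X))
        {F : MCSet X | ∃ f : X → ℝ, Continuous f ∧ (F : Set (X × ℝ)) = graphOf f}) := by
  refine ⟨dense_generic (fun F hF => hF) (fun f hf => graph_isCusco hf),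
    dense_generic (fun F hF => hF.1) (fun f hf => ⟨graph_isCusco hf, fun x _ =>
      ⟨f x, valuesAt_graphOf f x⟩⟩),
    dense_generic (fun F hF => hF.1) (fun f hf => graph_isMinimalCusco hf)⟩
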